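/- Let φ:(0,∞)→(0,∞) be a strictly increasing bijection of (0,∞) onto (0,∞) such that x ↦ xφ(e^{−x}) is nondecreasing on (0,∞). Then for every c₀ > 0, the infimum over x > 0 of φ^{-1}(1/(xt)) / φ^{-1}(1/((x+c₀)t)) tends to ∞ as t → ∞; that is, for every M > 0 there exists T > 0 such that for all t ≥ T and all x > 0, φ^{-1}(1/(xt)) ≥ M·φ^{-1}(1/((x+c₀)t)). -/

import Mathlib

open Real MeasureTheory Filter Set Topology

/-- rapid divergence of the ratio `φ⁻¹(1/(xt)) / φ⁻¹(1/((x+c₀)t))`,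
uniformly in `x > 0`. -/
theorem stmt_3
    (φ φinv : ℝ → ℝ)
    (hφpos : ∀ x > (0:ℝ), 0 < φ x)
    (hφmono : StrictMonoOn φ (Ioi 0))
    (hφsurj : φ '' (Ioi 0) = Ioi 0)
    (hφinv : ∀ x > (0:ℝ), φinv (φ x) = x ∧ φ (φinv x) = x ∧ 0 < φinv x)
    (hφnd : MonotoneOn (fun x => x * φ (Real.exp (-x))) (Ioi 0)) :
    ∀ c₀ > (0:ℝ), ∀ M > (0:ℝ), ∃ T > (0:ℝ), ∀ t ≥ T, ∀ x > (0:ℝ),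
      M * φinv (1 / ((x + c₀) * t)) ≤ φinv (1 / (x * t)) := by
  -- φinv is monotone on positives
  have hinvmono : ∀ a b : ℝ, 0 < a → a ≤ b → φinv a ≤ φinv b := by
    intro a b ha hab
    have hb : 0 < b := lt_of_lt_of_le ha hab
    by_contra h
    push_neg at h
    obtain ⟨h1a, h1b, h1c⟩ := hφinv a ha
    obtain ⟨h2a, h2b, h2c⟩ := hφinv b hb
    have := hφmono (mem_Ioi.2 h2c) (mem_Ioi.2 h1c) h
    rw [h1b, h2b] at this
    linarith
  intro c₀ hc₀ M hM
  set M' : ℝ := M + 1 with hM'def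
  have hM'1 : 1 < M' := by simp [hM'def]; linarith
  have hM'0 : (0:ℝ) < M' := by linarith
  have hlogM : 0 < Real.log M' := Real.log_pos hM'1
  have hφ1M : 0 < φ (1 / M') := hφpos _ (by positivity)
  refine ⟨1 / (c₀ * φ (1/M')), by positivity, ?_⟩
  intro t ht x hx
  have ht0 : (0:ℝ) < t := lt_of_lt_of_le (by positivity) ht
  set y := x + c₀ with hy
  have hyc : c₀ < y := by simp [hy]; linarith
  have hy0 : (0:ℝ) < y := by linarith
  obtain ⟨hu1, hu2, hu3⟩ := hφinv (1/(y*t)) (by positivity)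
  obtain ⟨hv1, hv2, hv3⟩ := hφinv (1/(x*t)) (by positivity)
  set u := φinv (1 / (y * t)) with hu
  set v := φinv (1 / (x * t)) with hv
  -- u ≤ v
  have huv : u ≤ v := by
    apply hinvmono _ _ (by positivity)
    apply one_div_le_one_div_of_le (by positivity)
    have : x ≤ y := by linarith
    nlinarith
  -- the key bound : u ≤ M' ^ (-(y/c₀))
  have hpow0 : (0:ℝ) < M' ^ (-(y/c₀)) := Real.rpow_pos_of_pos hM'0 _
  have hzval : Real.exp (-(y * Real.log M' / c₀)) = M' ^ (-(y/c₀)) := by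
    rw [Real.rpow_def_of_pos hM'0]
    ring_nf
  have hψ : Real.log M' * φ (Real.exp (-(Real.log M')))
      ≤ (y * Real.log M' / c₀) * φ (Real.exp (-(y * Real.log M' / c₀))) := by
    have h1 : Real.log M' ∈ Ioi (0:ℝ) := mem_Ioi.2 hlogM
    have h2 : (y * Real.log M' / c₀) ∈ Ioi (0:ℝ) := mem_Ioi.2 (by positivity)
    have hle : Real.log M' ≤ y * Real.log M' / c₀ := by
      rw [le_div_iff₀ hc₀]
      nlinarith
    exact hφnd h1 h2 hle
  have hexplog : Real.exp (-(Real.log M')) = 1 / M' := by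
    rw [Real.exp_neg, Real.exp_log hM'0, one_div]
  rw [hexplog, hzval] at hψ
  -- so φ (M'^(-(y/c₀))) ≥ c₀ φ(1/M') / y
  have hφlb : c₀ * φ (1/M') / y ≤ φ (M' ^ (-(y/c₀))) := by
    rw [div_le_iff₀ hy0]
    have h := hψ
    have hpos : 0 < φ (M' ^ (-(y/c₀))) := hφpos _ hpow0
    rw [div_mul_eq_mul_div, le_div_iff₀ hc₀] at h
    nlinarith
  have hkey : u ≤ M' ^ (-(y/c₀)) := by
    have h1 : 1 / (y * t) ≤ φ (M' ^ (-(y/c₀))) := by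
      have : 1 / (y * t) ≤ c₀ * φ (1/M') / y := by
        rw [div_le_div_iff₀ (by positivity) hy0]
        have : 1 / (c₀ * φ (1/M')) ≤ t := ht
        rw [div_le_iff₀ (by positivity)] at this
        nlinarith
      linarith
    calc u ≤ φinv (φ (M' ^ (-(y/c₀)))) :=
            hinvmono _ _ (by positivity) h1
      _ = M' ^ (-(y/c₀)) := (hφinv _ hpow0).1
  have hMM' : M * u ≤ M' * u := mul_le_mul_of_nonneg_right (by simp [hM'def]) hu3.le
  by_cases hv1' : 1 ≤ v
  · -- easy case: u ≤ 1/M'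
    have : M' ^ (-(y/c₀)) ≤ M' ^ (-1 : ℝ) := by
      apply Real.rpow_le_rpow_of_exponent_le hM'1.le
      have : 1 ≤ y / c₀ := by rw [le_div_iff₀ hc₀]; linarith
      linarith
    have h2 : M' ^ (-1 : ℝ) = 1 / M' := by
      rw [Real.rpow_neg_one, one_div]
    have hu1M : u ≤ 1 / M' := by rw [← h2]; linarith
    have h3 : u * M' ≤ 1 := by
      rw [← le_div_iff₀ hM'0]; linarith
    have h4 : M' * u = u * M' := mul_comm _ _
    linarith
  · push_neg at hv1'
    set s := -Real.log u with hs
    set r := -Real.log v with hr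
    have hulv : u < 1 := lt_of_le_of_lt huv hv1'
    have hr0 : 0 < r := neg_pos.2 (Real.log_neg hv3 hv1')
    have hrs : r ≤ s := by
      have := Real.log_le_log hu3 huv
      simp only [hs, hr]
      linarith
    have hs0 : 0 < s := lt_of_lt_of_le hr0 hrs
    have heu : Real.exp (-s) = u := by
      rw [hs, neg_neg, Real.exp_log hu3]
    have hev : Real.exp (-r) = v := by
      rw [hr, neg_neg, Real.exp_log hv3]
    -- lower bound on s
    have hslb : y * Real.log M' / c₀ ≤ s := by
      have h := Real.log_le_log hu3 hkey
      rw [Real.log_rpow hM'0] at h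
      have h2 : y / c₀ * Real.log M' ≤ -Real.log u := by linarith
      rw [div_mul_eq_mul_div] at h2
      simpa [hs] using h2
    -- monotonicity applied at r and s
    have hψ2 : r * φ (Real.exp (-r)) ≤ s * φ (Real.exp (-s)) :=
      hφnd (mem_Ioi.2 hr0) (mem_Ioi.2 hs0) hrs
    rw [heu, hev, hu2, hv2] at hψ2
    -- r * (1/(x t)) ≤ s * (1/(y t))  ⇒  r * y ≤ s * x
    have hry : r * y ≤ s * x := by
      have hxt : (0:ℝ) < x * t := by positivity
      have hyt : (0:ℝ) < y * t := by positivity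
      rw [mul_one_div, mul_one_div, div_le_div_iff₀ hxt hyt] at hψ2
      have h3 : (r * y) * t ≤ (s * x) * t := by
        have e1 : r * (y * t) = (r * y) * t := (mul_assoc r y t).symm
        have e2 : s * (x * t) = (s * x) * t := (mul_assoc s x t).symm
        linarith
      exact le_of_mul_le_mul_right h3 ht0
    have hdiff : Real.log M' ≤ s - r := by
      have h1 : s * c₀ ≤ (s - r) * y := by
        have hyx : y = x + c₀ := hy
        have he : (s - r) * y = (s * x - r * y) + s * c₀ := by rw [hyx]; ring
        linarith
      have h2 : y * Real.log M' ≤ s * c₀ := by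
        rw [div_le_iff₀ hc₀] at hslb; linarith
      have h3 : y * Real.log M' ≤ (s - r) * y := le_trans h2 h1
      have h4 : Real.log M' * y ≤ (s - r) * y := by linarith [mul_comm y (Real.log M')]
      exact le_of_mul_le_mul_right h4 hy0
    -- conclude
    have : M' * u ≤ v := by
      rw [← heu, ← hev, ← Real.exp_log hM'0, ← Real.exp_add]
      apply Real.exp_le_exp.2
      linarith
    exact le_trans hMM' this
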